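/- arXiv:2605.21627 — 2 statements merged into one kernel-verified Lean document; each statement's English description precedes it below -/
import Mathlib

section
/- Let G be a finite group of permutations acting on a set X, let S : X → ℝ be any function, and let Z be an X-valued random variable whose distribution is invariant under every π ∈ G (i.e., π(Z) has the same distribution as Z for all π ∈ G). Define the permutation p-value p(x) = (1/|G|) · #{π ∈ G : S(π(x)) ≤ S(x)}. Then for every α ∈ (0,1), P(p(Z) ≤ α) ≤ α. -/
open MeasureTheory ENNReal

/-- Deterministic key lemma: for fixed `x`, the number of `π ∈ G` whose
p-value at `π x` is ≤ α is at most `α * |G|`. -/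
lemma perm_key {X : Type*} (G : Finset (Equiv.Perm X))
    (hGmul : ∀ π ∈ G, ∀ σ ∈ G, π * σ ∈ G)
    (hGinv : ∀ π ∈ G, π⁻¹ ∈ G)
    (S : X → ℝ) (α : ℝ) (hα0 : 0 ≤ α) (x : X) :
    ((G.filter fun π =>
        ((G.filter fun σ => S (σ (π x)) ≤ S (π x)).card : ℝ) / (G.card : ℝ) ≤ α).card : ℝ)
      ≤ α * G.card := by
  set B := G.filter fun π =>
      ((G.filter fun σ => S (σ (π x)) ≤ S (π x)).card : ℝ) / (G.card : ℝ) ≤ α with hB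
  rcases B.eq_empty_or_nonempty with h | h
  · simp [h]
    positivity
  · obtain ⟨π₀, hπ₀B, hmax⟩ := B.exists_max_image (fun π => S (π x)) h
    have hπ₀G : π₀ ∈ G := (Finset.mem_filter.mp hπ₀B).1
    have hπ₀p : ((G.filter fun σ => S (σ (π₀ x)) ≤ S (π₀ x)).card : ℝ) / (G.card : ℝ) ≤ α :=
      (Finset.mem_filter.mp hπ₀B).2
    have hNpos : (0 : ℝ) < G.card := by
      have : G.Nonempty := ⟨π₀, hπ₀G⟩
      exact_mod_cast Finset.card_pos.mpr this
    have hcard : B.card ≤ (G.filter fun σ => S (σ (π₀ x)) ≤ S (π₀ x)).card := by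
      apply Finset.card_le_card_of_injOn (fun π => π * π₀⁻¹)
      · intro π hπ
        have hπG : π ∈ G := (Finset.mem_filter.mp hπ).1
        refine Finset.mem_filter.mpr ⟨hGmul π hπG π₀⁻¹ (hGinv π₀ hπ₀G), ?_⟩
        have : (π * π₀⁻¹) (π₀ x) = π x := by simp
        rw [this]
        exact hmax π hπ
      · intro a _ b _ hab
        exact mul_right_cancel hab
    have h₀ : ((G.filter fun σ => S (σ (π₀ x)) ≤ S (π₀ x)).card : ℝ) ≤ α * G.card :=
      (div_le_iff₀ hNpos).mp hπ₀p
    calc (B.card : ℝ) ≤ _ := by exact_mod_cast hcard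
      _ ≤ α * G.card := h₀

/-- Validity of permutation p-values under a finite group of distribution-preserving
permutations: `P(p(Z) ≤ α) ≤ α`. -/
theorem stmt0 {X : Type*} [MeasurableSpace X]
    (G : Finset (Equiv.Perm X))
    (hG1 : (1 : Equiv.Perm X) ∈ G)
    (hGmul : ∀ π ∈ G, ∀ σ ∈ G, π * σ ∈ G)
    (hGinv : ∀ π ∈ G, π⁻¹ ∈ G)
    (hGmeas : ∀ π ∈ G, Measurable (π : X → X))
    (S : X → ℝ) (hS : Measurable S)
    (μ : Measure X) [IsProbabilityMeasure μ]
    (hinv : ∀ π ∈ G, μ.map (π : X → X) = μ)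
    (α : ℝ) (hα : α ∈ Set.Ioo (0 : ℝ) 1) :
    μ {x | ((G.filter fun π => S (π x) ≤ S x).card : ℝ) / (G.card : ℝ) ≤ α}
      ≤ ENNReal.ofReal α := by
  obtain ⟨hα0, hα1⟩ := hα
  set f : X → ℝ := fun x => ((G.filter fun π => S (π x) ≤ S x).card : ℝ) with hf
  set A : Set X := {x | f x / (G.card : ℝ) ≤ α} with hA
  have hfm : Measurable f := by
    have : f = fun x => ∑ π ∈ G, if S (π x) ≤ S x then (1 : ℝ) else 0 := by
      funext x
      show ((G.filter fun π => S (π x) ≤ S x).card : ℝ) = _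
      rw [Finset.card_filter]
      push_cast [apply_ite (fun n : ℕ => (n : ℝ))]
      rfl
    rw [this]
    exact Finset.measurable_sum _ fun π hπ =>
      Measurable.ite (measurableSet_le (hS.comp (hGmeas π hπ)) hS)
        measurable_const measurable_const
  have hAm : MeasurableSet A := by
    have : A = (fun x => f x / (G.card : ℝ)) ⁻¹' Set.Iic α := rfl
    rw [this]
    exact (hfm.div_const _) measurableSet_Iic
  have hNpos : 0 < G.card := Finset.card_pos.mpr ⟨1, hG1⟩
  -- main inequality: N * μ A ≤ ofReal (α * N)
  have hmain : (G.card : ℝ≥0∞) * μ A ≤ ENNReal.ofReal (α * G.card) := by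
    have h1 : (G.card : ℝ≥0∞) * μ A = ∑ π ∈ G, μ ((π : X → X) ⁻¹' A) := by
      rw [Finset.sum_congr rfl fun π hπ => ?_, Finset.sum_const, nsmul_eq_mul]
      rw [← Measure.map_apply (hGmeas π ‹π ∈ G›) hAm, hinv π ‹π ∈ G›]
    have h2 : ∑ π ∈ G, μ ((π : X → X) ⁻¹' A)
        = ∫⁻ x, ∑ π ∈ G, ((π : X → X) ⁻¹' A).indicator (fun _ => (1 : ℝ≥0∞)) x ∂μ := by
      rw [MeasureTheory.lintegral_finset_sum]
      · exact Finset.sum_congr rfl fun π hπ =>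
          (lintegral_indicator_one (hAm.preimage (hGmeas π hπ))).symm
      · exact fun π hπ => measurable_const.indicator (hAm.preimage (hGmeas π hπ))
    have h3 : ∀ x, ∑ π ∈ G, ((π : X → X) ⁻¹' A).indicator (fun _ => (1 : ℝ≥0∞)) x
        ≤ ENNReal.ofReal (α * G.card) := by
      intro x
      have hcount : ∑ π ∈ G, ((π : X → X) ⁻¹' A).indicator (fun _ => (1 : ℝ≥0∞)) x
          = ((G.filter fun π => π x ∈ A).card : ℝ≥0∞) := by
        rw [Finset.card_filter]
        push_cast
        exact Finset.sum_congr rfl fun π hπ => by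
          by_cases h : π x ∈ A <;> simp [Set.indicator_apply, Set.mem_preimage, h]
      rw [hcount]
      have hkey := perm_key G hGmul hGinv S α (le_of_lt hα0) x
      have : ((G.filter fun π => π x ∈ A).card : ℝ) ≤ α * G.card := hkey
      calc ((G.filter fun π => π x ∈ A).card : ℝ≥0∞)
          = ENNReal.ofReal ((G.filter fun π => π x ∈ A).card : ℝ) := by
            rw [ENNReal.ofReal_natCast]
        _ ≤ ENNReal.ofReal (α * G.card) := ENNReal.ofReal_le_ofReal this
    calc (G.card : ℝ≥0∞) * μ A = _ := h1
      _ = _ := h2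
      _ ≤ ∫⁻ _, ENNReal.ofReal (α * G.card) ∂μ := lintegral_mono h3
      _ = ENNReal.ofReal (α * G.card) := by simp
  have hrhs : ENNReal.ofReal (α * G.card) = ENNReal.ofReal α * (G.card : ℝ≥0∞) := by
    rw [ENNReal.ofReal_mul (le_of_lt hα0), ENNReal.ofReal_natCast]
  rw [hrhs, mul_comm (ENNReal.ofReal α) _] at hmain
  have hN0 : (G.card : ℝ≥0∞) ≠ 0 := Nat.cast_ne_zero.mpr hNpos.ne'
  have hNt : (G.card : ℝ≥0∞) ≠ ⊤ := ENNReal.natCast_ne_top _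
  exact (ENNReal.mul_le_mul_iff_right hN0 hNt).mp hmain
end

section
/- Let x, y₁, …, y_M be real numbers and define p = (1 + #{m ∈ [M] : yₘ ≤ x}) / (M + 1). If (x, y₁, …, y_M) is an exchangeable random vector (its joint distribution is invariant under all permutations of the M+1 coordinates), then for every α ∈ (0,1), P(p ≤ α) ≤ α. -/
set_option maxRecDepth 8000

open MeasureTheory Finset ENNReal

private noncomputable def rnk (M : ℕ) (v : Fin (M + 1) → ℝ) (i : Fin (M + 1)) : ℕ :=
  (Finset.univ.filter fun j => v j ≤ v i).card

private lemma rnk_eq_sum (M : ℕ) (v : Fin (M + 1) → ℝ) (i : Fin (M + 1)) :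
    rnk M v i = ∑ j : Fin (M + 1), if v j ≤ v i then 1 else 0 := by
  rw [rnk, Finset.card_filter]

private lemma rnk_comp (M : ℕ) (v : Fin (M + 1) → ℝ) (σ : Equiv.Perm (Fin (M + 1)))
    (i : Fin (M + 1)) : rnk M (v ∘ σ) i = rnk M v (σ i) := by
  rw [rnk_eq_sum, rnk_eq_sum]
  exact Equiv.sum_comp σ (fun j => if v j ≤ v (σ i) then 1 else 0)

private lemma card_rnk_le (M k : ℕ) (v : Fin (M + 1) → ℝ) :
    (Finset.univ.filter fun i => rnk M v i ≤ k).card ≤ k := by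
  set S := Finset.univ.filter fun i => rnk M v i ≤ k with hS
  rcases S.eq_empty_or_nonempty with h | h
  · simp [h]
  · obtain ⟨i, hiS, hmax⟩ := S.exists_max_image v h
    have hsub : S ⊆ Finset.univ.filter fun j => v j ≤ v i := by
      intro j hj
      simp only [Finset.mem_filter, Finset.mem_univ, true_and]
      exact hmax j hj
    have h1 : S.card ≤ rnk M v i := Finset.card_le_card hsub
    have h2 : rnk M v i ≤ k := by
      have := hiS; simp only [hS, Finset.mem_filter] at this; exact this.2
    omega

private lemma rnk_measurable (M : ℕ) (i : Fin (M + 1)) :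
    Measurable (fun v : Fin (M + 1) → ℝ => rnk M v i) := by
  simp only [rnk_eq_sum]
  apply Finset.measurable_sum
  intro j _
  exact Measurable.ite (measurableSet_le (measurable_pi_apply j) (measurable_pi_apply i))
    measurable_const measurable_const

/-- Validity of Monte Carlo conformal p-values: if `(x, y₁, …, y_M)` is exchangeable,
then `p = (1 + #{m : yₘ ≤ x})/(M+1)` satisfies `P(p ≤ α) ≤ α`. Here `W ω 0` plays the
role of `x` and `W ω m.succ` of `yₘ`. -/
theorem stmt1 {Ω : Type*} [MeasurableSpace Ω]
    (P : Measure Ω) [IsProbabilityMeasure P]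
    (M : ℕ) (W : Ω → Fin (M + 1) → ℝ) (hW : Measurable W)
    (hexch : ∀ σ : Equiv.Perm (Fin (M + 1)),
      P.map (fun ω => W ω ∘ σ) = P.map W)
    (α : ℝ) (hα : α ∈ Set.Ioo (0 : ℝ) 1) :
    P {ω | (1 + ((Finset.univ.filter fun m : Fin M => W ω m.succ ≤ W ω 0).card : ℝ))
        / (M + 1 : ℝ) ≤ α} ≤ ENNReal.ofReal α := by
  obtain ⟨hα0, hα1⟩ := hα
  set k : ℕ := ⌊α * (M + 1)⌋₊ with hk
  set B : Fin (M + 1) → Set (Fin (M + 1) → ℝ) := fun i => {v | rnk M v i ≤ k} with hB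
  have hBmeas : ∀ i, MeasurableSet (B i) := fun i =>
    measurableSet_le (rnk_measurable M i) measurable_const
  have hMpos : (0:ℝ) < (M + 1 : ℝ) := by positivity
  -- rnk at 0 equals 1 + count
  have hrnk0 : ∀ v : Fin (M + 1) → ℝ,
      rnk M v 0 = 1 + (Finset.univ.filter fun m : Fin M => v m.succ ≤ v 0).card := by
    intro v
    rw [rnk_eq_sum, Fin.sum_univ_succ, if_pos le_rfl, Finset.card_filter]
  -- the event equals W ⁻¹' (B 0)
  have hset : {ω | (1 + ((Finset.univ.filter fun m : Fin M => W ω m.succ ≤ W ω 0).card : ℝ))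
        / (M + 1 : ℝ) ≤ α} = W ⁻¹' (B 0) := by
    ext ω
    rw [Set.mem_setOf_eq, Set.mem_preimage, hB, Set.mem_setOf_eq,
      hrnk0 (W ω), hk, Nat.le_floor_iff (by positivity), div_le_iff₀ hMpos]
    push_cast
    constructor <;> intro h <;> linarith
  -- all B i have the same measure under P.map W
  have hsame : ∀ i, (P.map W) (B i) = (P.map W) (B 0) := by
    intro i
    have hσ := hexch (Equiv.swap i 0)
    have hWσ : Measurable (fun ω => W ω ∘ (Equiv.swap i 0)) :=
      measurable_pi_lambda _ (fun m => (measurable_pi_apply _).comp hW)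
    calc (P.map W) (B i) = (P.map (fun ω => W ω ∘ (Equiv.swap i 0))) (B i) := by rw [hσ]
    _ = P ((fun ω => W ω ∘ (Equiv.swap i 0)) ⁻¹' (B i)) := Measure.map_apply hWσ (hBmeas i)
    _ = P (W ⁻¹' (B 0)) := by
        congr 1
        ext ω
        simp only [Set.mem_preimage, hB, Set.mem_setOf_eq, rnk_comp, Equiv.swap_apply_left]
    _ = (P.map W) (B 0) := (Measure.map_apply hW (hBmeas 0)).symm
  -- sum of indicators bounded by k
  have hsum : (M + 1 : ℝ≥0∞) * (P.map W) (B 0) ≤ (k : ℝ≥0∞) := by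
    have : ∑ i : Fin (M + 1), (P.map W) (B i) = (M + 1 : ℝ≥0∞) * (P.map W) (B 0) := by
      simp [hsame, Finset.sum_const, mul_comm]
    rw [← this]
    have hint : ∑ i : Fin (M + 1), (P.map W) (B i)
        = ∫⁻ v, ∑ i : Fin (M + 1), (B i).indicator (fun _ => (1:ℝ≥0∞)) v ∂(P.map W) := by
      rw [lintegral_finset_sum _ (fun i _ =>
        (measurable_const.indicator (hBmeas i)))]
      congr 1
      ext i
      exact (lintegral_indicator_one (hBmeas i)).symm
    rw [hint]
    have hle : ∀ v, ∑ i : Fin (M + 1), (B i).indicator (fun _ => (1:ℝ≥0∞)) v ≤ (k : ℝ≥0∞) := by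
      intro v
      have : ∑ i : Fin (M + 1), (B i).indicator (fun _ => (1:ℝ≥0∞)) v
          = ((Finset.univ.filter fun i => rnk M v i ≤ k).card : ℝ≥0∞) := by
        rw [Finset.card_filter]
        push_cast
        congr 1
        ext i
        simp [Set.indicator_apply, hB, Set.mem_setOf_eq]
      rw [this]
      exact_mod_cast Nat.cast_le.mpr (card_rnk_le M k v)
    calc ∫⁻ v, ∑ i : Fin (M + 1), (B i).indicator (fun _ => (1:ℝ≥0∞)) v ∂(P.map W)
        ≤ ∫⁻ _, (k : ℝ≥0∞) ∂(P.map W) := lintegral_mono hle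
      _ = (k : ℝ≥0∞) := by
          have : IsProbabilityMeasure (P.map W) := Measure.isProbabilityMeasure_map hW.aemeasurable
          simp
  -- conclude
  rw [hset, ← Measure.map_apply hW (hBmeas 0)]
  have hkα : (k : ℝ) ≤ α * (M + 1) := Nat.floor_le (by positivity)
  have h1 : (P.map W) (B 0) ≤ (k : ℝ≥0∞) / (M + 1 : ℝ≥0∞) := by
    rw [ENNReal.le_div_iff_mul_le (Or.inl (by simp)) (Or.inl (by simp))]
    rw [mul_comm]
    exact hsum
  refine h1.trans ?_
  rw [ENNReal.div_le_iff_le_mul (Or.inl (by simp)) (Or.inl (by simp))]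
  calc (k : ℝ≥0∞) = ENNReal.ofReal (k : ℝ) := by simp
    _ ≤ ENNReal.ofReal (α * (M + 1)) := ENNReal.ofReal_le_ofReal hkα
    _ = ENNReal.ofReal α * ENNReal.ofReal (M + 1) := ENNReal.ofReal_mul hα0.le
    _ = ENNReal.ofReal α * (M + 1 : ℝ≥0∞) := by
        congr 1
        rw [show ((M:ℝ) + 1) = ((M + 1 : ℕ) : ℝ) by push_cast; ring, ENNReal.ofReal_natCast]
        push_cast; ring
end
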